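/- Let F_k and G_k be the k×(k+1) matrices with (F_k)_{i,j} = 1 if j = i+1 and 0 otherwise, and (G_k)_{i,j} = 1 if j = i and 0 otherwise. Then the set of pairs (X₁₁, X₂₂) of complex matrices of sizes (k+1)×(k+1) and k×k respectively satisfying X₂₂* F_k + F_k X₁₁ = 0 and X₂₂* G_k + G_k X₁₁ = 0 equals { (α I_{k+1}, -ᾱ I_k) : α ∈ ℂ }. -/

import Mathlib

open ComplexConjugate


/-- With F_k and G_k the k×(k+1) shift matrices, the solutions of
X₂₂*F + F·X₁₁ = 0, X₂₂*G + G·X₁₁ = 0 are exactly the pairs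
(α·I_{k+1}, -ᾱ·I_k), α ∈ ℂ. -/
theorem stmt_15 (k : ℕ)
    (F G : Matrix (Fin k) (Fin (k + 1)) ℂ)
    (hF : F = fun i j => if j.1 = i.1 + 1 then 1 else 0)
    (hG : G = fun i j => if j.1 = i.1 then 1 else 0) :
    {p : Matrix (Fin (k + 1)) (Fin (k + 1)) ℂ × Matrix (Fin k) (Fin k) ℂ |
        p.2.conjTranspose * F + F * p.1 = 0 ∧
        p.2.conjTranspose * G + G * p.1 = 0} =
      {p | ∃ α : ℂ, p = (α • (1 : Matrix (Fin (k + 1)) (Fin (k + 1)) ℂ),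
        (-(starRingEnd ℂ α)) • (1 : Matrix (Fin k) (Fin k) ℂ))} := by
  ext p
  obtain ⟨A, B⟩ := p
  simp only [Set.mem_setOf_eq]
  constructor
  · rintro ⟨h1, h2⟩
    have hFA : ∀ (i : Fin k) (j : Fin (k+1)), (F * A) i j = A i.succ j := by
      intro i j
      have h : ∀ x : Fin (k+1), (x.1 = i.1 + 1) = (x = i.succ) := fun x => by
        simp [Fin.ext_iff]
      rw [Matrix.mul_apply]
      simp only [Matrix.mul_apply, hF, ite_mul, one_mul, zero_mul, h,
        Finset.sum_ite_eq', Finset.mem_univ, if_true]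
    have hGA : ∀ (i : Fin k) (j : Fin (k+1)), (G * A) i j = A i.castSucc j := by
      intro i j
      have h : ∀ x : Fin (k+1), (x.1 = i.1) = (x = i.castSucc) := fun x => by
        simp [Fin.ext_iff]
      rw [Matrix.mul_apply]
      simp only [Matrix.mul_apply, hG, ite_mul, one_mul, zero_mul, h,
        Finset.sum_ite_eq', Finset.mem_univ, if_true]
    have hBF0 : ∀ i : Fin k, (B.conjTranspose * F) i 0 = 0 := by
      intro i
      rw [Matrix.mul_apply]
      simp [Matrix.mul_apply, hF, Matrix.conjTranspose_apply]
    have hBFs : ∀ (i j : Fin k), (B.conjTranspose * F) i j.succ = conj (B j i) := by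
      intro i j
      have h : ∀ x : Fin k, ((j.succ).1 = x.1 + 1) = (x = j) := fun x => by
        simp [Fin.ext_iff, eq_comm]
      rw [Matrix.mul_apply]
      simp only [Matrix.mul_apply, Matrix.conjTranspose_apply, hF, mul_ite,
        mul_one, mul_zero, h, Finset.sum_ite_eq', Finset.mem_univ, if_true]
      rfl
    have hBGc : ∀ (i j : Fin k), (B.conjTranspose * G) i j.castSucc = conj (B j i) := by
      intro i j
      have h : ∀ x : Fin k, ((j.castSucc).1 = x.1) = (x = j) := fun x => by
        simp [Fin.ext_iff, eq_comm]
      rw [Matrix.mul_apply]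
      simp only [Matrix.mul_apply, Matrix.conjTranspose_apply, hG, mul_ite,
        mul_one, mul_zero, h, Finset.sum_ite_eq', Finset.mem_univ, if_true]
      rfl
    have hBGl : ∀ i : Fin k, (B.conjTranspose * G) i (Fin.last k) = 0 := by
      intro i
      have h : ∀ x : Fin k, (k = x.1) = False := fun x => by
        have := x.2; simp; omega
      rw [Matrix.mul_apply]
      simp [Matrix.mul_apply, hG, h]
    have e1 : ∀ (i : Fin k) (j : Fin (k+1)),
        (B.conjTranspose * F) i j + (F * A) i j = 0 := by
      intro i j
      have := congrFun (congrFun h1 i) j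
      simpa [Matrix.add_apply] using this
    have e2 : ∀ (i : Fin k) (j : Fin (k+1)),
        (B.conjTranspose * G) i j + (G * A) i j = 0 := by
      intro i j
      have := congrFun (congrFun h2 i) j
      simpa [Matrix.add_apply] using this
    have E1a : ∀ i : Fin k, A i.succ 0 = 0 := by
      intro i; have := e1 i 0; rwa [hBF0, hFA, zero_add] at this
    have E1b : ∀ i j : Fin k, conj (B j i) + A i.succ j.succ = 0 := by
      intro i j; have := e1 i j.succ; rwa [hBFs, hFA] at this
    have E2a : ∀ i j : Fin k, conj (B j i) + A i.castSucc j.castSucc = 0 := by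
      intro i j; have := e2 i j.castSucc; rwa [hBGc, hGA] at this
    have E2b : ∀ i : Fin k, A i.castSucc (Fin.last k) = 0 := by
      intro i; have := e2 i (Fin.last k); rwa [hBGl, hGA, zero_add] at this
    have step : ∀ i j : Fin k, A i.castSucc j.castSucc = A i.succ j.succ := by
      intro i j
      have ha := E1b i j
      have hb := E2a i j
      linear_combination hb - ha
    have shift : ∀ (m i j : ℕ) (hi : i + m ≤ k) (hj : j + m ≤ k),
        A ⟨i, by omega⟩ ⟨j, by omega⟩ = A ⟨i + m, by omega⟩ ⟨j + m, by omega⟩ := by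
      intro m
      induction m with
      | zero => intro i j hi hj; rfl
      | succ m ih =>
        intro i j hi hj
        have h1 : A (⟨i, by omega⟩ : Fin (k+1)) ⟨j, by omega⟩
            = A ⟨i + m, by omega⟩ ⟨j + m, by omega⟩ := ih i j (by omega) (by omega)
        have h2 : A (⟨i + m, by omega⟩ : Fin (k+1)) ⟨j + m, by omega⟩
            = A ⟨i + m + 1, by omega⟩ ⟨j + m + 1, by omega⟩ :=
          step ⟨i + m, by omega⟩ ⟨j + m, by omega⟩
        exact h1.trans h2
    have hA : ∀ i j : Fin (k+1), A i j = if i = j then A 0 0 else 0 := by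
      intro i j
      rcases lt_trichotomy i.1 j.1 with hlt | heq | hgt
      · rw [if_neg (by intro h; rw [h] at hlt; omega)]
        have hjk := j.2
        have hs : A i j = A ⟨i.1 + (k - j.1), by omega⟩ ⟨j.1 + (k - j.1), by omega⟩ :=
          shift (k - j.1) i.1 j.1 (by omega) (by omega)
        rw [hs, show (⟨j.1 + (k - j.1), by omega⟩ : Fin (k+1)) = Fin.last k from
          Fin.ext (by simp [Fin.last]; omega)]
        exact E2b ⟨i.1 + (k - j.1), by omega⟩
      · rw [if_pos (Fin.ext heq)]
        have hik := i.2
        have hs : A (0 : Fin (k+1)) (0 : Fin (k+1))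
            = A ⟨0 + i.1, by omega⟩ ⟨0 + i.1, by omega⟩ :=
          shift i.1 0 0 (by omega) (by omega)
        have h0 : A i j = A ⟨0 + i.1, by omega⟩ ⟨0 + i.1, by omega⟩ := by
          congr 1
          · exact Fin.ext (show i.1 = 0 + i.1 by omega)
          · exact Fin.ext (show j.1 = 0 + i.1 by omega)
        rw [h0, ← hs]
      · rw [if_neg (by intro h; rw [h] at hgt; omega)]
        have hik := i.2
        have hs : A (⟨i.1 - j.1, by omega⟩ : Fin (k+1)) ⟨0, by omega⟩
            = A ⟨i.1 - j.1 + j.1, by omega⟩ ⟨0 + j.1, by omega⟩ :=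
          shift j.1 (i.1 - j.1) 0 (by omega) (by omega)
        have h0 : A i j = A ⟨i.1 - j.1 + j.1, by omega⟩ ⟨0 + j.1, by omega⟩ := by
          congr 1
          · exact Fin.ext (show i.1 = i.1 - j.1 + j.1 by omega)
          · exact Fin.ext (show j.1 = 0 + j.1 by omega)
        rw [h0, ← hs]
        have h9 : (⟨i.1 - j.1, by omega⟩ : Fin (k+1))
            = Fin.succ ⟨i.1 - j.1 - 1, by omega⟩ :=
          Fin.ext (show i.1 - j.1 = i.1 - j.1 - 1 + 1 by omega)
        have h10 : (⟨0, by omega⟩ : Fin (k+1)) = 0 := Fin.ext (by simp)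
        rw [h9, h10]
        exact E1a _
    refine ⟨A 0 0, ?_⟩
    have hB : ∀ j i : Fin k, B j i = if j = i then -(conj (A 0 0)) else 0 := by
      intro j i
      have hthis := E2a i j
      rw [hA] at hthis
      by_cases hij : i = j
      · subst hij
        rw [if_pos rfl] at hthis ⊢
        have hcb : conj (B i i) = -(A 0 0) := by linear_combination hthis
        have := congrArg conj hcb
        rwa [Complex.conj_conj, map_neg] at this
      · have hne : ¬ (Fin.castSucc i = Fin.castSucc j) :=
          fun h => hij (Fin.castSucc_injective _ h)
        rw [if_neg hne, add_zero] at hthis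
        rw [if_neg (fun h => hij h.symm)]
        have := congrArg conj hthis
        rwa [Complex.conj_conj, map_zero] at this
    refine Prod.ext ?_ ?_
    · ext i j
      simp only [Matrix.smul_apply, Matrix.one_apply, smul_eq_mul]
      rw [hA]
      split <;> simp
    · ext j i
      simp only [Matrix.smul_apply, Matrix.one_apply, smul_eq_mul]
      rw [hB]
      split <;> simp
  · rintro ⟨α, hp⟩
    rw [Prod.ext_iff] at hp
    obtain ⟨hp1, hp2⟩ := hp
    simp only at hp1 hp2
    subst hp1; subst hp2
    constructor <;>
    · simp [Matrix.conjTranspose_smul, Matrix.smul_mul, Matrix.mul_smul]
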